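/- Let F : [a,b] → K(ℝ^d) be of bounded variation with compact graph, and suppose F is continuous (in the Hausdorff metric) at ξ ∈ (a,b). Then F has Property 2 at ξ: for every metric pair (y⁻, y⁺) ∈ Π(F(ξ−), F(ξ+)) there exist sequences ξ_n⁻ < ξ < ξ_n⁺ with ξ_n⁻, ξ_n⁺ → ξ and points (y_n⁻, y_n⁺) ∈ Π(F(ξ_n⁻), F(ξ_n⁺)) with y_n⁻ → y⁻ and y_n⁺ → y⁺. -/

import Mathlib

open Filter Metric Topology Set TopologicalSpace

noncomputable section

/-- The set of projections of `x` on `B`: points of `B` nearest to `x`. -/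
def metricProj {E : Type*} [MetricSpace E] (x : E) (B : Set E) : Set E :=
  {b ∈ B | dist x b = Metric.infDist x B}

/-- The set of metric pairs of `A` and `B`. -/
def MetricPairs {E : Type*} [MetricSpace E] (A B : Set E) : Set (E × E) :=
  {p | p.1 ∈ A ∧ p.2 ∈ B ∧ (p.1 ∈ metricProj p.2 A ∨ p.2 ∈ metricProj p.1 B)}

/-- A partition `a = x_0 < x_1 < ... < x_n = b` of `[a,b]`. -/
structure ItvPartition (a b : ℝ) where
  n : ℕ
  pts : Fin (n + 1) → ℝ
  mono : StrictMono pts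
  first : pts 0 = a
  last : pts (Fin.last n) = b

/-- The norm `|χ| = max_i (x_{i+1} - x_i)` of a partition. -/
noncomputable def ItvPartition.meshNorm {a b : ℝ} (χ : ItvPartition a b) : ℝ :=
  ⨆ i : Fin χ.n, (χ.pts i.succ - χ.pts i.castSucc)

/-- `c` is a chain function of the set-valued function `F` based on the partition `χ`:
it is piecewise constant, with values at consecutive partition points forming metric pairs
of the corresponding values of `F`. -/
def IsChainFun {E : Type*} [MetricSpace E] {a b : ℝ}
    (F : ℝ → Set E) (χ : ItvPartition a b) (c : ℝ → E) : Prop :=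
  ∃ y : Fin (χ.n + 1) → E,
    (∀ i : Fin χ.n,
      (y i.castSucc, y i.succ) ∈ MetricPairs (F (χ.pts i.castSucc)) (F (χ.pts i.succ))) ∧
    (∀ i : Fin χ.n, ∀ t ∈ Set.Ico (χ.pts i.castSucc) (χ.pts i.succ), c t = y i.castSucc) ∧
    c b = y (Fin.last χ.n)

/-- `s` is a metric selection of `F` on `[a,b]`: a selection of `F` which is the pointwise
limit of a sequence of chain functions of `F` whose partition norms tend to `0`. -/
def IsMetricSelection {E : Type*} [MetricSpace E] (F : ℝ → Set E) (a b : ℝ) (s : ℝ → E) : Prop :=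
  (∀ x ∈ Set.Icc a b, s x ∈ F x) ∧
  ∃ χ : ℕ → ItvPartition a b, ∃ c : ℕ → ℝ → E,
    (∀ k, IsChainFun F (χ k) (c k)) ∧
    Filter.Tendsto (fun k => (χ k).meshNorm) Filter.atTop (nhds 0) ∧
    ∀ x ∈ Set.Icc a b, Filter.Tendsto (fun k => c k x) Filter.atTop (nhds (s x))

/-- Property 2 of `F` at `ξ`, with `Fm = F(ξ-)`, `Fp = F(ξ+)`: every metric pair of the
one-sided limits is a limit of metric pairs `(y_n^-, y_n^+) ∈ Π(F(ξ_n^-), F(ξ_n^+))`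
with `ξ_n^- < ξ < ξ_n^+`, `ξ_n^± → ξ`. -/
def Property2 {E : Type*} [MetricSpace E] (F : ℝ → Set E) (a b ξ : ℝ)
    (Fm Fp : Set E) : Prop :=
  ∀ ym yp : E, (ym, yp) ∈ MetricPairs Fm Fp →
    ∃ ξm ξp : ℕ → ℝ, ∃ ym' yp' : ℕ → E,
      (∀ n, ξm n ∈ Set.Ico a ξ) ∧ (∀ n, ξp n ∈ Set.Ioc ξ b) ∧
      Filter.Tendsto ξm Filter.atTop (nhds ξ) ∧ Filter.Tendsto ξp Filter.atTop (nhds ξ) ∧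
      (∀ n, (ym' n, yp' n) ∈ MetricPairs (F (ξm n)) (F (ξp n))) ∧
      Filter.Tendsto ym' Filter.atTop (nhds ym) ∧ Filter.Tendsto yp' Filter.atTop (nhds yp)

/-- The metric average `(1/2) A ⊕ (1/2) B = {(a+b)/2 : (a,b) ∈ Π(A,B)}`. -/
def metricAvg {E : Type*} [NormedAddCommGroup E] [NormedSpace ℝ E] (A B : Set E) : Set E :=
  {v | ∃ p ∈ MetricPairs A B, v = (2⁻¹ : ℝ) • (p.1 + p.2)}

/-- The limit set `A_F(x) = {(s(x-) + s(x+))/2 : s a metric selection of F}`. -/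
def limitSet {E : Type*} [NormedAddCommGroup E] [NormedSpace ℝ E]
    (F : ℝ → Set E) (a b x : ℝ) : Set E :=
  {v | ∃ s : ℝ → E, ∃ sm sp : E, IsMetricSelection F a b s ∧
      Filter.Tendsto s (nhdsWithin x (Set.Ico a x)) (nhds sm) ∧
      Filter.Tendsto s (nhdsWithin x (Set.Ioc x b)) (nhds sp) ∧
      v = (2⁻¹ : ℝ) • (sm + sp)}

/-- The left local quasi-modulus `ω̃⁻(f, xs, δ)` of `f` at `xs`, where `fl = f(xs-)`. -/
noncomputable def qmodLeft {X : Type*} [PseudoMetricSpace X]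
    (f : ℝ → X) (fl : X) (a b xs δ : ℝ) : ℝ :=
  sSup {r | ∃ x ∈ Set.Ico (xs - δ) xs ∩ Set.Icc a b, r = dist fl (f x)}

/-- The right local quasi-modulus `ω̃⁺(f, xs, δ)` of `f` at `xs`, where `fr = f(xs+)`. -/
noncomputable def qmodRight {X : Type*} [PseudoMetricSpace X]
    (f : ℝ → X) (fr : X) (a b xs δ : ℝ) : ℝ :=
  sSup {r | ∃ x ∈ Set.Ioc xs (xs + δ) ∩ Set.Icc a b, r = dist fr (f x)}

/-- The graph of a set-valued function on `[a,b]` is compact. -/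
def HasCompactGraph {E : Type*} [MetricSpace E] (F : ℝ → Set E) (a b : ℝ) : Prop :=
  IsCompact {p : ℝ × E | p.1 ∈ Set.Icc a b ∧ p.2 ∈ F p.1}

/-- The (real-valued) variation function `v_f(x) = V_a^x(f)`. -/
noncomputable def varFun {X : Type*} [PseudoEMetricSpace X] (f : ℝ → X) (a x : ℝ) : ℝ :=
  (eVariationOn f (Set.Icc a x)).toReal

/-- Upper Kuratowski limit of a sequence of sets in a topological space. -/
def kuratowskiLimsup {X : Type*} [TopologicalSpace X] (C : ℕ → Set X) : Set X :=
  {x | ∃ φ : ℕ → ℕ, StrictMono φ ∧ ∃ c : ℕ → X,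
    (∀ k, c k ∈ C (φ k)) ∧ Filter.Tendsto c Filter.atTop (nhds x)}

/-- if `F` is continuous at `ξ`, then `F` has Property 2 at `ξ`. -/
theorem stmt_12 {d : ℕ} (a b : ℝ) (hab : a < b)
    (F : ℝ → NonemptyCompacts (EuclideanSpace ℝ (Fin d)))
    (hBV : BoundedVariationOn F (Set.Icc a b))
    (hgraph : HasCompactGraph (fun t => (F t : Set (EuclideanSpace ℝ (Fin d)))) a b)
    (ξ : ℝ) (hξ : ξ ∈ Set.Ioo a b)
    (hcont : ContinuousWithinAt F (Set.Icc a b) ξ)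
    (Fm Fp : NonemptyCompacts (EuclideanSpace ℝ (Fin d)))
    (hFm : Filter.Tendsto F (nhdsWithin ξ (Set.Ico a ξ)) (nhds Fm))
    (hFp : Filter.Tendsto F (nhdsWithin ξ (Set.Ioc ξ b)) (nhds Fp)) :
    Property2 (fun t => (F t : Set (EuclideanSpace ℝ (Fin d)))) a b ξ
      (Fm : Set (EuclideanSpace ℝ (Fin d))) (Fp : Set (EuclideanSpace ℝ (Fin d))) := by
  classical
  obtain ⟨haξ, hξb⟩ := hξ
  set E := EuclideanSpace ℝ (Fin d)
  have hsubm : Set.Ico a ξ ⊆ Set.Icc a b := fun t ht => ⟨ht.1, ht.2.le.trans hξb.le⟩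
  have hsubp : Set.Ioc ξ b ⊆ Set.Icc a b := fun t ht => ⟨haξ.le.trans ht.1.le, ht.2⟩
  have hnem : (nhdsWithin ξ (Set.Ico a ξ)).NeBot := by
    rw [← mem_closure_iff_nhdsWithin_neBot, closure_Ico haξ.ne]
    exact ⟨haξ.le, le_refl ξ⟩
  have hnep : (nhdsWithin ξ (Set.Ioc ξ b)).NeBot := by
    rw [← mem_closure_iff_nhdsWithin_neBot, closure_Ioc hξb.ne]
    exact ⟨le_refl ξ, hξb.le⟩
  have hFmξ : Fm = F ξ := tendsto_nhds_unique hFm (hcont.mono hsubm)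
  have hFpξ : Fp = F ξ := tendsto_nhds_unique hFp (hcont.mono hsubp)
  intro ym yp hpair
  -- from the pair and Fm = Fp = F ξ, deduce yp = ym
  obtain ⟨hym, hyp, hor⟩ := hpair
  rw [hFmξ] at hym
  rw [hFpξ] at hyp
  have hyeq : yp = ym := by
    rcases hor with h | h
    · obtain ⟨-, hd⟩ := h
      rw [hFmξ] at hd
      have : Metric.infDist yp (F ξ : Set E) = 0 := Metric.infDist_zero_of_mem hyp
      rw [this] at hd
      exact dist_eq_zero.mp hd
    · obtain ⟨-, hd⟩ := h
      rw [hFpξ] at hd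
      have : Metric.infDist ym (F ξ : Set E) = 0 := Metric.infDist_zero_of_mem hym
      rw [this] at hd
      exact (dist_eq_zero.mp hd).symm
  subst hyeq
  -- main per-ε construction
  have main : ∀ ε : ℝ, 0 < ε → ∃ tm tp : ℝ, ∃ u v : E,
      tm ∈ Set.Ico a ξ ∧ tp ∈ Set.Ioc ξ b ∧ dist tm ξ < ε ∧ dist tp ξ < ε ∧
      (u, v) ∈ MetricPairs (F tm : Set E) (F tp : Set E) ∧
      dist u yp < ε ∧ dist v yp < 3 * ε := by
    intro ε hε
    obtain ⟨δ, hδ, hδc⟩ := Metric.continuousWithinAt_iff.mp hcont ε hε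
    set r := min δ (min ε (ξ - a)) with hr
    have hr0 : 0 < r := lt_min hδ (lt_min hε (by linarith))
    set tm := ξ - r / 2 with htm
    have htma : a < tm := by
      have : r ≤ ξ - a := (min_le_right _ _).trans (min_le_right _ _)
      simp only [htm]; linarith
    have htmξ : tm < ξ := by simp only [htm]; linarith
    have hdtm : dist tm ξ < δ := by
      rw [Real.dist_eq, abs_of_nonpos (by simp only [htm]; linarith)]
      have : r ≤ δ := min_le_left _ _
      simp only [htm]; linarith
    have hdtmε : dist tm ξ < ε := by
      rw [Real.dist_eq, abs_of_nonpos (by simp only [htm]; linarith)]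
      have : r ≤ ε := (min_le_right _ _).trans (min_le_left _ _)
      simp only [htm]; linarith
    set r' := min δ (min ε (b - ξ)) with hr'
    have hr'0 : 0 < r' := lt_min hδ (lt_min hε (by linarith))
    set tp := ξ + r' / 2 with htp
    have htpξ : ξ < tp := by simp only [htp]; linarith
    have htpb : tp ≤ b := by
      have : r' ≤ b - ξ := (min_le_right _ _).trans (min_le_right _ _)
      simp only [htp]; linarith
    have hdtp : dist tp ξ < δ := by
      rw [Real.dist_eq, abs_of_nonneg (by simp only [htp]; linarith)]
      have : r' ≤ δ := min_le_left _ _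
      simp only [htp]; linarith
    have hdtpε : dist tp ξ < ε := by
      rw [Real.dist_eq, abs_of_nonneg (by simp only [htp]; linarith)]
      have : r' ≤ ε := (min_le_right _ _).trans (min_le_left _ _)
      simp only [htp]; linarith
    have htmIcc : tm ∈ Set.Icc a b := ⟨htma.le, htmξ.le.trans hξb.le⟩
    have htpIcc : tp ∈ Set.Icc a b := ⟨haξ.le.trans htpξ.le, htpb⟩
    have hFm' : dist (F tm) (F ξ) < ε := hδc htmIcc hdtm
    have hFp' : dist (F tp) (F ξ) < ε := hδc htpIcc hdtp
    have hfin : ∀ s t : NonemptyCompacts E,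
        EMetric.hausdorffEdist (s : Set E) (t : Set E) ≠ ⊤ := fun s t =>
      Metric.hausdorffEdist_ne_top_of_nonempty_of_bounded s.nonempty t.nonempty
        s.isCompact.isBounded t.isCompact.isBounded
    -- pick u ∈ F tm nearest to yp
    obtain ⟨u, hu, hud⟩ := (F tm).isCompact.exists_infDist_eq_dist (F tm).nonempty yp
    have hudlt : dist yp u < ε := by
      rw [← hud]
      calc Metric.infDist yp (F tm : Set E)
          ≤ Metric.hausdorffDist (F ξ : Set E) (F tm : Set E) :=
            Metric.infDist_le_hausdorffDist_of_mem hyp (hfin _ _)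
        _ = dist (F tm) (F ξ) := by
            rw [NonemptyCompacts.dist_eq, Metric.hausdorffDist_comm]
        _ < ε := hFm'
    -- pick v ∈ F tp nearest to u
    obtain ⟨v, hv, hvd⟩ := (F tp).isCompact.exists_infDist_eq_dist (F tp).nonempty u
    have hvdlt : dist u v < 2 * ε := by
      rw [← hvd]
      calc Metric.infDist u (F tp : Set E)
          ≤ Metric.hausdorffDist (F tm : Set E) (F tp : Set E) :=
            Metric.infDist_le_hausdorffDist_of_mem hu (hfin _ _)
        _ ≤ Metric.hausdorffDist (F tm : Set E) (F ξ : Set E) +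
              Metric.hausdorffDist (F ξ : Set E) (F tp : Set E) :=
            Metric.hausdorffDist_triangle (hfin _ _)
        _ = dist (F tm) (F ξ) + dist (F ξ) (F tp) := by
            rw [NonemptyCompacts.dist_eq, NonemptyCompacts.dist_eq]
        _ < ε + ε := add_lt_add hFm' (by rw [dist_comm]; exact hFp')
        _ = 2 * ε := by ring
    refine ⟨tm, tp, u, v, ⟨htma.le, htmξ⟩, ⟨htpξ, htpb⟩, hdtmε, hdtpε,
      ⟨hu, hv, Or.inr ⟨hv, hvd.symm⟩⟩, ?_, ?_⟩
    · rw [dist_comm]; exact hudlt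
    · calc dist v yp ≤ dist v u + dist u yp := dist_triangle _ _ _
        _ < 2 * ε + ε := by rw [dist_comm v u, dist_comm u yp]; exact add_lt_add hvdlt hudlt
        _ = 3 * ε := by ring
  have key : ∀ n : ℕ, ∃ tm tp : ℝ, ∃ u v : E,
      tm ∈ Set.Ico a ξ ∧ tp ∈ Set.Ioc ξ b ∧
      dist tm ξ < 1 / (n + 1) ∧ dist tp ξ < 1 / (n + 1) ∧
      (u, v) ∈ MetricPairs (F tm : Set E) (F tp : Set E) ∧
      dist u yp < 1 / (n + 1) ∧ dist v yp < 3 * (1 / (n + 1)) :=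
    fun n => main (1 / (n + 1)) (by positivity)
  choose tm tp u v h1 h2 h3 h4 h5 h6 h7 using key
  have hlim : Filter.Tendsto (fun n : ℕ => 1 / ((n : ℝ) + 1)) Filter.atTop (nhds 0) :=
    tendsto_one_div_add_atTop_nhds_zero_nat
  have hlim3 : Filter.Tendsto (fun n : ℕ => 3 * (1 / ((n : ℝ) + 1))) Filter.atTop (nhds 0) := by
    simpa using hlim.const_mul 3
  refine ⟨tm, tp, u, v, h1, h2, ?_, ?_, h5, ?_, ?_⟩
  · exact tendsto_iff_dist_tendsto_zero.mpr
      (squeeze_zero (fun n => dist_nonneg) (fun n => (h3 n).le) hlim)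
  · exact tendsto_iff_dist_tendsto_zero.mpr
      (squeeze_zero (fun n => dist_nonneg) (fun n => (h4 n).le) hlim)
  · exact tendsto_iff_dist_tendsto_zero.mpr
      (squeeze_zero (fun n => dist_nonneg) (fun n => (h6 n).le) hlim)
  · exact tendsto_iff_dist_tendsto_zero.mpr
      (squeeze_zero (fun n => dist_nonneg) (fun n => (h7 n).le) hlim3)
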